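/- arXiv:0812.1043 — 3 statements merged into one kernel-verified Lean document; each statement's English description precedes it below -/
import Mathlib

section
/- Let f and g be polynomials in C[x1,x2] of positive degrees l and m respectively. If there are more than l·m points of C^2 at which both f and g vanish, then f and g have a common (non-constant) factor. -/
open MvPolynomial


private lemma bz_degree_add (u v : Fin 2 →₀ ℕ) :
    Finsupp.degree (u + v) = Finsupp.degree u + Finsupp.degree v := by
  simp only [Finsupp.degree_eq_weight_one]
  exact map_add _ u v

private lemma bz_sum_eq_degree (d : Fin 2 →₀ ℕ) :
    (d.sum fun _ e => e) = Finsupp.degree d := rfl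

private lemma bz_totalDegree_mul {p q : MvPolynomial (Fin 2) ℂ} (hp : p ≠ 0) (hq : q ≠ 0) :
    (p * q).totalDegree = p.totalDegree + q.totalDegree := by
  apply le_antisymm (totalDegree_mul p q)
  set dp := p.totalDegree with hdp
  set dq := q.totalDegree with hdq
  set P := homogeneousComponent dp p with hP
  set Q := homogeneousComponent dq q with hQ
  have hhp : P.IsHomogeneous dp := homogeneousComponent_isHomogeneous dp p
  have hhq : Q.IsHomogeneous dq := homogeneousComponent_isHomogeneous dq q
  -- remainders have lower degree coefficients
  have hlow : ∀ (r : MvPolynomial (Fin 2) ℂ) (e : Fin 2 →₀ ℕ),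
      coeff e (r - homogeneousComponent r.totalDegree r) ≠ 0 → Finsupp.degree e < r.totalDegree := by
    intro r e he
    rw [coeff_sub, coeff_homogeneousComponent] at he
    by_cases hd : Finsupp.degree e = r.totalDegree
    · rw [if_pos hd, sub_self] at he; exact absurd rfl he
    · rw [if_neg hd, sub_zero] at he
      exact lt_of_le_of_ne
        (by rw [← bz_sum_eq_degree]; exact le_totalDegree (mem_support_iff.mpr he)) hd
  -- top components are nonzero
  have htop : ∀ r : MvPolynomial (Fin 2) ℂ, r ≠ 0 →
      homogeneousComponent r.totalDegree r ≠ 0 := by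
    intro r hr
    obtain ⟨d, hd, hds⟩ := Finset.exists_mem_eq_sup r.support
      (Finset.nonempty_iff_ne_empty.mpr (mt MvPolynomial.support_eq_empty.mp hr)) (fun m : Fin 2 →₀ ℕ => m.sum fun _ e => e)
    intro h0
    have : coeff d (homogeneousComponent r.totalDegree r) = coeff d r := by
      rw [coeff_homogeneousComponent, if_pos]
      rw [← bz_sum_eq_degree, ← hds]; rfl
    rw [h0, coeff_zero] at this
    exact (mem_support_iff.mp hd) this.symm
  have hPne : P ≠ 0 := htop p hp
  have hQne : Q ≠ 0 := htop q hq
  have hPQ : P * Q ≠ 0 := mul_ne_zero hPne hQne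
  obtain ⟨d, hd⟩ := Finset.nonempty_iff_ne_empty.mpr (mt MvPolynomial.support_eq_empty.mp hPQ)
  have hcd : coeff d (P * Q) ≠ 0 := mem_support_iff.mp hd
  have hdeg : Finsupp.degree d = dp + dq := by
    have := (hhp.mul hhq) hcd
    rw [Finsupp.degree_eq_weight_one]; exact this
  -- coeff d of the cross terms vanishes
  have hc1 : coeff d (P * (q - Q)) = 0 := by
    rw [coeff_mul]
    apply Finset.sum_eq_zero
    rintro ⟨u, v⟩ huv
    rw [Finset.HasAntidiagonal.mem_antidiagonal] at huv
    by_cases hu : coeff u P = 0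
    · rw [hu, zero_mul]
    by_cases hv : coeff v (q - Q) = 0
    · rw [hv, mul_zero]
    exfalso
    have h1 : Finsupp.degree u = dp := by
      have := hhp hu; rw [Finsupp.degree_eq_weight_one]; exact this
    have h2 : Finsupp.degree v < dq := hlow q v hv
    have := bz_degree_add u v
    rw [huv, hdeg, h1] at this
    omega
  have hc2 : coeff d ((p - P) * q) = 0 := by
    rw [coeff_mul]
    apply Finset.sum_eq_zero
    rintro ⟨u, v⟩ huv
    rw [Finset.HasAntidiagonal.mem_antidiagonal] at huv
    by_cases hu : coeff u (p - P) = 0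
    · rw [hu, zero_mul]
    by_cases hv : coeff v q = 0
    · rw [hv, mul_zero]
    exfalso
    have h1 : Finsupp.degree u < dp := hlow p u hu
    have h2 : Finsupp.degree v ≤ dq := by
      rw [← bz_sum_eq_degree]; exact le_totalDegree (mem_support_iff.mpr hv)
    have := bz_degree_add u v
    rw [huv, hdeg] at this
    omega
  have hsplit : p * q = P * Q + (P * (q - Q) + (p - P) * q) := by ring
  have hcoe : coeff d (p * q) ≠ 0 := by
    rw [hsplit, coeff_add, coeff_add, hc1, hc2, add_zero, add_zero]
    exact hcd
  calc dp + dq = Finsupp.degree d := hdeg.symm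
    _ = d.sum fun _ e => e := (bz_sum_eq_degree d).symm
    _ ≤ (p * q).totalDegree := le_totalDegree (mem_support_iff.mpr hcoe)


private lemma bz_finsupp_sum_fin (n : Fin 2 →₀ ℕ) : (n.sum fun _ e => e) = n 0 + n 1 := by
  rw [Finsupp.sum_fintype _ _ (fun _ => rfl)]
  exact Fin.sum_univ_two _

private noncomputable def bz_degEquiv (k : ℕ) :
    { n : Fin 2 →₀ ℕ | (n.sum fun _ e => e) ≤ k } ≃ (Σ i : Fin (k+1), Fin (k+1-(i:ℕ))) where
  toFun n := ⟨⟨n.1 0, by have := n.2; rw [Set.mem_setOf_eq, bz_finsupp_sum_fin] at this; omega⟩,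
              ⟨n.1 1, by
                have := n.2; rw [Set.mem_setOf_eq, bz_finsupp_sum_fin] at this
                show (n.1 1) < k + 1 - n.1 0
                omega⟩⟩
  invFun x := ⟨Finsupp.equivFunOnFinite.symm ![(x.1 : ℕ), (x.2 : ℕ)], by
      rw [Set.mem_setOf_eq, bz_finsupp_sum_fin]
      have h1 := x.1.2
      have h2 := x.2.2
      show (![(x.1 : ℕ), (x.2 : ℕ)] 0) + (![(x.1 : ℕ), (x.2 : ℕ)] 1) ≤ k
      simp only [Matrix.cons_val_zero, Matrix.cons_val_one, Matrix.head_cons]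
      omega⟩
  left_inv n := Subtype.ext (Finsupp.ext fun i => by fin_cases i <;> rfl)
  right_inv x := rfl

private lemma bz_card_aux (k : ℕ) :
    Fintype.card (Σ i : Fin (k+1), Fin (k+1-(i:ℕ))) * 2 = (k+1)*(k+2) := by
  rw [Fintype.card_sigma]
  simp only [Fintype.card_fin]
  rw [Fin.sum_univ_eq_sum_range (fun i => k + 1 - i) (k+1)]
  have h1 : ∑ i ∈ Finset.range (k+1), (k + 1 - i) = ∑ i ∈ Finset.range (k+1), (i + 1) := by
    rw [← Finset.sum_range_reflect (fun i => k + 1 - i) (k+1)]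
    apply Finset.sum_congr rfl
    intro j hj
    rw [Finset.mem_range] at hj
    omega
  have h2 : ∑ i ∈ Finset.range (k+1), (i + 1) = ∑ i ∈ Finset.range (k+2), i := by
    rw [Finset.sum_range_succ' (fun i => i) (k+1)]
    simp
  rw [h1, h2, Finset.sum_range_id_mul_two]
  have h3 : k + 2 - 1 = k + 1 := rfl
  rw [h3]; ring

private lemma bz_finrank_V (k : ℕ) :
    Module.finrank ℂ (restrictTotalDegree (Fin 2) ℂ k) * 2 = (k+1)*(k+2) := by
  have : Fintype ({ n : Fin 2 →₀ ℕ | (n.sum fun _ e => e) ≤ k }) :=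
    Fintype.ofEquiv _ (bz_degEquiv k).symm
  show Module.finrank ℂ
    ↥(restrictSupport ℂ { n : Fin 2 →₀ ℕ | (n.sum fun _ e => e) ≤ k }) * 2 = (k+1)*(k+2)
  rw [Module.finrank_eq_card_basis (basisRestrictSupport ℂ _),
    Fintype.card_congr (bz_degEquiv k), bz_card_aux]


private lemma bz_fun_ne {s t : Fin 2 → ℂ} (h : t ≠ s) :
    t (if t 0 = s 0 then 1 else 0) ≠ s (if t 0 = s 0 then 1 else 0) := by
  by_cases h0 : t 0 = s 0
  · rw [if_pos h0]
    intro h1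
    exact h (funext fun i => by fin_cases i <;> assumption)
  · rw [if_neg h0]; exact h0

private lemma bz_interp_one (S : Finset (Fin 2 → ℂ)) (s : Fin 2 → ℂ) (hs : s ∈ S) :
    ∃ p : MvPolynomial (Fin 2) ℂ, p.totalDegree ≤ S.card - 1 ∧ eval s p ≠ 0 ∧
      ∀ t ∈ S, t ≠ s → eval t p = 0 := by
  classical
  set idx : (Fin 2 → ℂ) → Fin 2 := fun t => if t 0 = s 0 then 1 else 0 with hidx
  refine ⟨∏ t ∈ S.erase s, (X (idx t) - C (t (idx t))), ?_, ?_, ?_⟩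
  · calc (∏ t ∈ S.erase s, (X (idx t) - C (t (idx t)))).totalDegree
        ≤ ∑ t ∈ S.erase s, (X (idx t) - C (t (idx t))).totalDegree :=
          totalDegree_finset_prod _ _
      _ ≤ ∑ _t ∈ S.erase s, 1 := Finset.sum_le_sum
          (f := fun t => (X (idx t) - C (t (idx t)) : MvPolynomial (Fin 2) ℂ).totalDegree)
          fun t _ =>
          (totalDegree_sub_C_le _ _).trans (le_of_eq (totalDegree_X _))
      _ = (S.erase s).card := by rw [Finset.sum_const, smul_eq_mul, mul_one]
      _ ≤ S.card - 1 := by rw [Finset.card_erase_of_mem hs]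
  · rw [map_prod]
    apply Finset.prod_ne_zero_iff.mpr
    intro t ht
    simp only [map_sub, eval_X, eval_C]
    have := bz_fun_ne (Finset.ne_of_mem_erase ht)
    intro h
    exact this (by linear_combination -h)
  · intro t ht hts
    rw [map_prod]
    apply Finset.prod_eq_zero (Finset.mem_erase.mpr ⟨hts, ht⟩)
    simp only [map_sub, eval_X, eval_C, sub_self]

private lemma bz_interp (S : Finset (Fin 2 → ℂ)) (n : ℕ) (hn : S.card ≤ n + 1)
    (φ : (Fin 2 → ℂ) → ℂ) :
    ∃ p : MvPolynomial (Fin 2) ℂ, p.totalDegree ≤ n ∧ ∀ s ∈ S, eval s p = φ s := by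
  classical
  choose q hq1 hq2 hq3 using fun s : {x // x ∈ S} => bz_interp_one S s s.2
  refine ⟨∑ s ∈ S.attach, C (φ s / eval (s : Fin 2 → ℂ) (q s)) * q s, ?_, ?_⟩
  · apply (totalDegree_finset_sum _ _).trans
    apply Finset.sup_le
    intro s _
    calc (C (φ (s:Fin 2 → ℂ) / eval (s : Fin 2 → ℂ) (q s)) * q s).totalDegree
        ≤ (C (φ (s:Fin 2 → ℂ) / eval (s : Fin 2 → ℂ) (q s)) :
            MvPolynomial (Fin 2) ℂ).totalDegree + (q s).totalDegree := totalDegree_mul _ _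
      _ ≤ 0 + (S.card - 1) := add_le_add (le_of_eq (totalDegree_C _)) (hq1 _)
      _ ≤ n := by omega
  · intro t ht
    rw [map_sum]
    rw [Finset.sum_eq_single (⟨t, ht⟩ : {x // x ∈ S})]
    · simp only [map_mul, eval_C]
      exact div_mul_cancel₀ _ (hq2 ⟨t, ht⟩)
    · intro b _ hbt
      simp only [map_mul, eval_C]
      rw [hq3 b t ht (fun h => hbt (Subtype.ext h.symm)), mul_zero]
    · intro h
      exact absurd (Finset.mem_attach _ _) h

private lemma bz_dim_identity (N l m A B Cc D : ℕ)
    (hA : A * 2 = (N+l+m+1)*(N+l+m+2)) (hB : B * 2 = (N+1)*(N+2))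
    (hC : Cc * 2 = (N+m+1)*(N+m+2)) (hD : D * 2 = (N+l+1)*(N+l+2)) :
    A + B = Cc + D + l * m := by
  have e : (N+l+m+1)*(N+l+m+2) + (N+1)*(N+2)
      = (N+m+1)*(N+m+2) + (N+l+1)*(N+l+2) + (l*m) * 2 := by ring
  linarith


private lemma bz_isUnit_of_deg_zero {h : MvPolynomial (Fin 2) ℂ} (h0 : h ≠ 0)
    (hd : h.totalDegree = 0) : IsUnit h := by
  rw [totalDegree_eq_zero_iff] at hd
  have : h = C (coeff 0 h) := by
    ext d
    by_cases hd0 : d = 0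
    · subst hd0; rw [coeff_C, if_pos rfl]
    · rw [coeff_C, if_neg (Ne.symm hd0)]
      by_contra hc
      obtain ⟨x, hx⟩ : ∃ x, d x ≠ 0 := by
        by_contra hall
        push_neg at hall
        exact hd0 (Finsupp.ext hall)
      exact hx (hd d (mem_support_iff.mpr hc) x)
  have hc0 : coeff 0 h ≠ 0 := fun hc => h0 (by rw [this, hc, map_zero])
  rw [this]
  exact (isUnit_iff_ne_zero.mpr hc0).map C

/-- **Bezout's theorem.** If `f, g ∈ ℂ[x₁,x₂]` have positive total degrees `l` and `m`
and vanish simultaneously at more than `l·m` points of `ℂ²`, then they have a common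
non-constant factor. -/
theorem bezout_points (f g : MvPolynomial (Fin 2) ℂ) (l m : ℕ)
    (hf : f.totalDegree = l) (hg : g.totalDegree = m) (hl : 0 < l) (hm : 0 < m)
    (S : Finset (Fin 2 → ℂ)) (hScard : l * m < S.card)
    (hS : ∀ x ∈ S, eval x f = 0 ∧ eval x g = 0) :
    ∃ h : MvPolynomial (Fin 2) ℂ, 0 < h.totalDegree ∧ h ∣ f ∧ h ∣ g := by
  classical
  by_contra hcon
  push_neg at hcon
  have hf0 : f ≠ 0 := fun h => by rw [h, totalDegree_zero] at hf; omega
  have hg0 : g ≠ 0 := fun h => by rw [h, totalDegree_zero] at hg; omega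
  have hrel : IsRelPrime f g := by
    intro h hdf hdg
    have h0 : h ≠ 0 := by
      rintro rfl
      exact hf0 (zero_dvd_iff.mp hdf)
    by_cases hdeg : 0 < h.totalDegree
    · exact absurd hdg (hcon h hdeg hdf)
    · exact bz_isUnit_of_deg_zero h0 (by omega)
  set N := S.card with hN
  set V0 := restrictTotalDegree (Fin 2) ℂ N with hV0
  set V1 := restrictTotalDegree (Fin 2) ℂ (N + m) with hV1
  set V2 := restrictTotalDegree (Fin 2) ℂ (N + l) with hV2
  set V3 := restrictTotalDegree (Fin 2) ℂ (N + l + m) with hV3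
  -- the multiplication map Φ(a,b) = a f + b g
  have memΦ : ∀ x : ↥V1 × ↥V2,
      ((((LinearMap.mulRight ℂ f).comp (V1.subtype.comp (LinearMap.fst ℂ ↥V1 ↥V2))) +
       ((LinearMap.mulRight ℂ g).comp (V2.subtype.comp (LinearMap.snd ℂ ↥V1 ↥V2)))) x) ∈ V3 := by
    rintro ⟨a, b⟩
    have ha : (a : MvPolynomial (Fin 2) ℂ).totalDegree ≤ N + m :=
      (mem_restrictTotalDegree _ _ _).mp a.2
    have hb : (b : MvPolynomial (Fin 2) ℂ).totalDegree ≤ N + l :=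
      (mem_restrictTotalDegree _ _ _).mp b.2
    show (a : MvPolynomial (Fin 2) ℂ) * f + (b : MvPolynomial (Fin 2) ℂ) * g ∈ V3
    rw [hV3, mem_restrictTotalDegree]
    apply (totalDegree_add _ _).trans
    apply max_le
    · apply (totalDegree_mul _ _).trans
      rw [hf]; omega
    · apply (totalDegree_mul _ _).trans
      rw [hg]; omega
  set Φ : ↥V1 × ↥V2 →ₗ[ℂ] ↥V3 := LinearMap.codRestrict V3 _ memΦ with hΦ
  have Φ_apply : ∀ x : ↥V1 × ↥V2,
      (Φ x : MvPolynomial (Fin 2) ℂ)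
        = (x.1 : MvPolynomial (Fin 2) ℂ) * f + (x.2 : MvPolynomial (Fin 2) ℂ) * g :=
    fun x => rfl
  -- the evaluation map
  set E : ↥V3 →ₗ[ℂ] (↥S → ℂ) := LinearMap.pi fun s =>
    ((aeval ((s : Fin 2 → ℂ)) : MvPolynomial (Fin 2) ℂ →ₐ[ℂ] ℂ).toLinearMap).comp V3.subtype
    with hE
  have E_apply : ∀ (p : ↥V3) (s : ↥S),
      E p s = eval (s : Fin 2 → ℂ) (p : MvPolynomial (Fin 2) ℂ) := by
    intro p s
    show aeval (s : Fin 2 → ℂ) (p : MvPolynomial (Fin 2) ℂ) = _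
    rw [aeval_def, MvPolynomial.eval, Algebra.algebraMap_self]
    rfl
  -- the map Ξ c = (c g, -(c f)) whose range contains ker Φ
  have memΞ1 : ∀ c : ↥V0, ((LinearMap.mulRight ℂ g).comp V0.subtype) c ∈ V1 := by
    intro c
    have hc : (c : MvPolynomial (Fin 2) ℂ).totalDegree ≤ N :=
      (mem_restrictTotalDegree _ _ _).mp c.2
    show (c : MvPolynomial (Fin 2) ℂ) * g ∈ V1
    rw [hV1, mem_restrictTotalDegree]
    apply (totalDegree_mul _ _).trans
    rw [hg]; omega
  have memΞ2 : ∀ c : ↥V0, ((-(LinearMap.mulRight ℂ f)).comp V0.subtype) c ∈ V2 := by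
    intro c
    have hc : (c : MvPolynomial (Fin 2) ℂ).totalDegree ≤ N :=
      (mem_restrictTotalDegree _ _ _).mp c.2
    show -((c : MvPolynomial (Fin 2) ℂ) * f) ∈ V2
    rw [hV2, mem_restrictTotalDegree, totalDegree_neg]
    apply (totalDegree_mul _ _).trans
    rw [hf]; omega
  set Ξ : ↥V0 →ₗ[ℂ] ↥V1 × ↥V2 := LinearMap.prod
      (LinearMap.codRestrict V1 _ memΞ1) (LinearMap.codRestrict V2 _ memΞ2) with hΞ
  have hker : LinearMap.ker Φ ≤ LinearMap.range Ξ := by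
    rintro ⟨a, b⟩ hab
    rw [LinearMap.mem_ker] at hab
    have h0 : (a : MvPolynomial (Fin 2) ℂ) * f + (b : MvPolynomial (Fin 2) ℂ) * g = 0 := by
      have := congrArg (Subtype.val) hab
      rwa [Φ_apply] at this
    have hdvd : g ∣ (a : MvPolynomial (Fin 2) ℂ) := by
      apply (hrel.symm).dvd_of_dvd_mul_right (y := (a : MvPolynomial (Fin 2) ℂ))
      have : (a : MvPolynomial (Fin 2) ℂ) * f = -((b : MvPolynomial (Fin 2) ℂ)) * g := by
        rw [neg_mul]
        exact eq_neg_of_add_eq_zero_left h0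
      rw [this]
      exact Dvd.intro_left _ rfl
    obtain ⟨c, hc⟩ := hdvd
    have hcmem : c ∈ V0 := by
      rw [hV0, mem_restrictTotalDegree]
      by_cases hc0 : c = 0
      · rw [hc0, totalDegree_zero]; omega
      · have ha : (a : MvPolynomial (Fin 2) ℂ).totalDegree ≤ N + m :=
          (mem_restrictTotalDegree _ _ _).mp a.2
        rw [hc, bz_totalDegree_mul hg0 hc0, hg] at ha
        omega
    have hbeq : (b : MvPolynomial (Fin 2) ℂ) = -(c * f) := by
      have h1 : g * (c * f + (b : MvPolynomial (Fin 2) ℂ)) = 0 := by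
        rw [mul_add]
        rw [hc] at h0
        linear_combination h0
      rcases mul_eq_zero.mp h1 with h2 | h2
      · exact absurd h2 hg0
      · linear_combination h2
    refine ⟨⟨c, hcmem⟩, ?_⟩
    apply Prod.ext
    · apply Subtype.ext
      show c * g = (a : MvPolynomial (Fin 2) ℂ)
      rw [hc]; ring
    · apply Subtype.ext
      show -(c * f) = (b : MvPolynomial (Fin 2) ℂ)
      rw [hbeq]
  have hrange : LinearMap.range Φ ≤ LinearMap.ker E := by
    rintro x ⟨⟨a, b⟩, rfl⟩
    rw [LinearMap.mem_ker]
    funext s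
    rw [E_apply, Φ_apply]
    obtain ⟨hf', hg'⟩ := hS (s : Fin 2 → ℂ) s.2
    show eval (s : Fin 2 → ℂ) ((a : MvPolynomial (Fin 2) ℂ) * f
      + (b : MvPolynomial (Fin 2) ℂ) * g) = 0
    rw [map_add, map_mul, map_mul, hf', hg', mul_zero, mul_zero, add_zero]
  have hEsurj : Function.Surjective E := by
    intro φ
    obtain ⟨p, hdeg, hval⟩ := bz_interp S (N + l + m) (by omega)
      (fun t => if ht : t ∈ S then φ ⟨t, ht⟩ else 0)
    refine ⟨⟨p, (mem_restrictTotalDegree _ _ _).mpr hdeg⟩, ?_⟩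
    funext s
    rw [E_apply]
    have := hval (s : Fin 2 → ℂ) s.2
    rw [dif_pos s.2] at this
    rw [this]
  -- dimension count
  have r1 : Module.finrank ℂ (LinearMap.ker Φ) ≤ Module.finrank ℂ ↥V0 := by
    calc Module.finrank ℂ (LinearMap.ker Φ) ≤ Module.finrank ℂ (LinearMap.range Ξ) :=
          Submodule.finrank_mono hker
      _ ≤ Module.finrank ℂ ↥V0 := LinearMap.finrank_range_le Ξ
  have r2 : Module.finrank ℂ (LinearMap.range Φ) + Module.finrank ℂ (LinearMap.ker Φ)
      = Module.finrank ℂ ↥V1 + Module.finrank ℂ ↥V2 := by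
    rw [LinearMap.finrank_range_add_finrank_ker Φ, Module.finrank_prod]
  have r3 : Module.finrank ℂ (LinearMap.range Φ) ≤ Module.finrank ℂ (LinearMap.ker E) :=
    Submodule.finrank_mono hrange
  have r4 : N + Module.finrank ℂ (LinearMap.ker E) = Module.finrank ℂ ↥V3 := by
    have h1 := LinearMap.finrank_range_add_finrank_ker E
    rw [LinearMap.range_eq_top.mpr hEsurj, finrank_top] at h1
    rw [← h1]
    congr 1
    rw [Module.finrank_fintype_fun_eq_card, Fintype.card_coe]
  have hid : Module.finrank ℂ ↥V3 + Module.finrank ℂ ↥V0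
      = Module.finrank ℂ ↥V1 + Module.finrank ℂ ↥V2 + l * m :=
    bz_dim_identity N l m _ _ _ _ (bz_finrank_V (N + l + m)) (bz_finrank_V N)
      (bz_finrank_V (N + m)) (bz_finrank_V (N + l))
  omega
end

section
/- Let p ∈ R[x1,x2,x3] and let a be a regular point of the zero set S of p. If three distinct lines contained in S all pass through a, then a is a flat point of S: every component of the algebraic second fundamental form II(p) vanishes at a. -/
open MvPolynomial

/-- The gradient `∇p` of a polynomial on `ℝ³`. -/
noncomputable def pgrad (p : MvPolynomial (Fin 3) ℝ) : Fin 3 → MvPolynomial (Fin 3) ℝ :=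
  fun i => pderiv i p

/-- Cross product of two triples of polynomials. -/
noncomputable def pcross (u v : Fin 3 → MvPolynomial (Fin 3) ℝ) :
    Fin 3 → MvPolynomial (Fin 3) ℝ :=
  ![u 1 * v 2 - u 2 * v 1, u 2 * v 0 - u 0 * v 2, u 0 * v 1 - u 1 * v 0]

/-- Directional derivative `∇_w f = w · ∇f` along a polynomial vector field `w`. -/
noncomputable def dirDeriv (w : Fin 3 → MvPolynomial (Fin 3) ℝ)
    (f : MvPolynomial (Fin 3) ℝ) : MvPolynomial (Fin 3) ℝ :=
  ∑ i : Fin 3, w i * pderiv i f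

/-- The standard basis vector `e_j`, as a constant polynomial vector field. -/
noncomputable def stdVec (j : Fin 3) : Fin 3 → MvPolynomial (Fin 3) ℝ :=
  fun i => if i = j then 1 else 0

/-- The algebraic second fundamental form
`II(p) = { (∇_{∇p × e_j} ∇p) × ∇p }_{j=1,2,3}`; for each `j`, `IIform p j` is a
triple of polynomials, giving nine polynomial components in all. -/
noncomputable def IIform (p : MvPolynomial (Fin 3) ℝ) (j : Fin 3) :
    Fin 3 → MvPolynomial (Fin 3) ℝ :=
  pcross (fun i => dirDeriv (pcross (pgrad p) (stdVec j)) (pgrad p i)) (pgrad p)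

/- ### Auxiliary material -/


lemma pderiv_pderiv_comm (i j : Fin 3) (f : MvPolynomial (Fin 3) ℝ) :
    pderiv i (pderiv j f) = pderiv j (pderiv i f) := by
  classical
  induction f using MvPolynomial.induction_on with
  | C r => simp
  | add f g hf hg => simp [hf, hg]
  | mul_X f k hf =>
      simp only [pderiv_mul, pderiv_X, Pi.single_apply, map_add, hf]
      by_cases hki : k = i <;> by_cases hkj : k = j <;> by_cases hij : i = j <;>
        simp [hki, hkj, hij, pderiv_mul, @eq_comm _ j i] <;> try ring


lemma line_hasDerivAt (q : MvPolynomial (Fin 3) ℝ) (a v : Fin 3 → ℝ) (t : ℝ) :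
    HasDerivAt (fun t : ℝ => eval (a + t • v) q)
      (∑ i : Fin 3, v i * eval (a + t • v) (pderiv i q)) t := by
  induction q using MvPolynomial.induction_on with
  | C r =>
      simp only [eval_C, pderiv_C, map_zero, mul_zero, Finset.sum_const_zero]
      exact hasDerivAt_const t r
  | add f g hf hg =>
      simp only [map_add, mul_add, Finset.sum_add_distrib]
      exact hf.add hg
  | mul_X f i hf =>
      have hx : (fun t : ℝ => eval (a + t • v) (f * X i))
          = fun t : ℝ => eval (a + t • v) f * (a i + t * v i) := by
        funext s; simp [Pi.add_apply, Pi.smul_apply, smul_eq_mul]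
      have hlin : HasDerivAt (fun t : ℝ => a i + t * v i) (v i) t := by
        have := ((hasDerivAt_id t).const_mul (v i)).const_add (a i)
        simpa [mul_comm] using this
      have h := hf.fun_mul hlin
      rw [hx]
      refine h.congr_deriv ?_
      classical
      simp only [pderiv_mul, map_add, map_mul, eval_X, pderiv_X, mul_add,
        Finset.sum_add_distrib, Pi.add_apply, Pi.smul_apply, smul_eq_mul]
      rw [Fin.sum_univ_three, Fin.sum_univ_three, Fin.sum_univ_three]
      fin_cases i <;> simp [Fin.sum_univ_three] <;> ring


/-- Dot product on `Fin 3 → ℝ`. -/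
def dot3 (x y : Fin 3 → ℝ) : ℝ := x 0 * y 0 + x 1 * y 1 + x 2 * y 2

/-- Cross product on `Fin 3 → ℝ`. -/
def cross3 (x y : Fin 3 → ℝ) : Fin 3 → ℝ :=
  ![x 1 * y 2 - x 2 * y 1, x 2 * y 0 - x 0 * y 2, x 0 * y 1 - x 1 * y 0]

/-- Bilinear form attached to a matrix `H`. -/
def bil (H : Fin 3 → Fin 3 → ℝ) (x y : Fin 3 → ℝ) : ℝ :=
  ∑ i : Fin 3, ∑ j : Fin 3, x i * H i j * y j

/-- `H` applied to a vector `w` (acting on the left). -/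
def hvec (H : Fin 3 → Fin 3 → ℝ) (w : Fin 3 → ℝ) : Fin 3 → ℝ :=
  fun i => ∑ m : Fin 3, H m i * w m

lemma cross3_apply (x y : Fin 3 → ℝ) :
    cross3 x y 0 = x 1 * y 2 - x 2 * y 1 ∧ cross3 x y 1 = x 2 * y 0 - x 0 * y 2 ∧
      cross3 x y 2 = x 0 * y 1 - x 1 * y 0 := by
  refine ⟨rfl, rfl, rfl⟩

lemma vec3_ext {x y : Fin 3 → ℝ} (h0 : x 0 = y 0) (h1 : x 1 = y 1) (h2 : x 2 = y 2) :
    x = y := by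
  funext i; fin_cases i <;> assumption

lemma dot3_self_ne {n : Fin 3 → ℝ} (hn : n ≠ 0) : dot3 n n ≠ 0 := by
  intro h
  apply hn
  simp only [dot3] at h
  have h0 : n 0 = 0 := by nlinarith [sq_nonneg (n 0), sq_nonneg (n 1), sq_nonneg (n 2), h]
  have h1 : n 1 = 0 := by nlinarith [sq_nonneg (n 0), sq_nonneg (n 1), sq_nonneg (n 2), h]
  have h2 : n 2 = 0 := by nlinarith [sq_nonneg (n 0), sq_nonneg (n 1), sq_nonneg (n 2), h]
  exact vec3_ext h0 h1 h2

/-- If `x × n = 0` and `n ≠ 0` then `x` is a multiple of `n`. -/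
lemma par_of_cross_eq_zero {x n : Fin 3 → ℝ} (h : cross3 x n = 0) (hn : n ≠ 0) :
    ∃ μ : ℝ, x = μ • n := by
  have h0 := congrFun h 0
  have h1 := congrFun h 1
  have h2 := congrFun h 2
  simp only [cross3, Matrix.cons_val_zero, Matrix.cons_val_one, Matrix.head_cons,
    Matrix.cons_val_two, Matrix.tail_cons, Pi.zero_apply] at h0 h1 h2
  have hne : n 0 ≠ 0 ∨ n 1 ≠ 0 ∨ n 2 ≠ 0 := by
    by_contra hc
    push_neg at hc
    exact hn (vec3_ext hc.1 hc.2.1 hc.2.2)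
  rcases hne with hne | hne | hne
  · refine ⟨x 0 / n 0, vec3_ext ?_ ?_ ?_⟩ <;>
      simp only [Pi.smul_apply, smul_eq_mul] <;> field_simp <;> linarith [h1, h2]
  · refine ⟨x 1 / n 1, vec3_ext ?_ ?_ ?_⟩ <;>
      simp only [Pi.smul_apply, smul_eq_mul] <;> field_simp <;> linarith [h0, h2]
  · refine ⟨x 2 / n 2, vec3_ext ?_ ?_ ?_⟩ <;>
      simp only [Pi.smul_apply, smul_eq_mul] <;> field_simp <;> linarith [h0, h1]

/-- Cramer-type expansion of any vector in the frame `v0, v1, v0 × v1`. -/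
lemma cramer3 (v0 v1 u : Fin 3 → ℝ) (i : Fin 3) :
    dot3 (cross3 v0 v1) (cross3 v0 v1) * u i =
      dot3 (cross3 u v1) (cross3 v0 v1) * v0 i +
        dot3 (cross3 v0 u) (cross3 v0 v1) * v1 i +
          dot3 u (cross3 v0 v1) * cross3 v0 v1 i := by
  fin_cases i <;> simp [dot3, cross3] <;> ring

/-- If `x ⊥ u` and `x ⊥ v` then `x × (u × v) = 0`. -/
lemma cross_cross_eq_zero {x u v : Fin 3 → ℝ} (h1 : dot3 x u = 0) (h2 : dot3 x v = 0) :
    cross3 x (cross3 u v) = 0 := by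
  simp only [dot3] at h1 h2
  apply vec3_ext <;> simp only [cross3, dot3, Matrix.cons_val_zero, Matrix.cons_val_one,
    Matrix.head_cons, Matrix.cons_val_two, Matrix.tail_cons, Pi.zero_apply] <;>
    [linear_combination u 0 * h2 - v 0 * h1; linear_combination u 1 * h2 - v 1 * h1;
     linear_combination u 2 * h2 - v 2 * h1]

lemma bil_left (H : Fin 3 → Fin 3 → ℝ) (α β : ℝ) (u v y : Fin 3 → ℝ) :
    bil H (fun i => α * u i + β * v i) y = α * bil H u y + β * bil H v y := by
  simp [bil, Fin.sum_univ_three]; ring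

lemma bil_right (H : Fin 3 → Fin 3 → ℝ) (α β : ℝ) (u v y : Fin 3 → ℝ) :
    bil H y (fun i => α * u i + β * v i) = α * bil H y u + β * bil H y v := by
  simp [bil, Fin.sum_univ_three]; ring

lemma bil_symm {H : Fin 3 → Fin 3 → ℝ} (hs : ∀ i j, H i j = H j i) (x y : Fin 3 → ℝ) :
    bil H x y = bil H y x := by
  simp only [bil, Fin.sum_univ_three]
  rw [hs 0 1, hs 0 2, hs 1 2]; ring

lemma dot3_hvec (H : Fin 3 → Fin 3 → ℝ) (w u : Fin 3 → ℝ) :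
    dot3 (hvec H w) u = bil H w u := by
  simp [dot3, hvec, bil, Fin.sum_univ_three]; ring

lemma dot3_comm (x y : Fin 3 → ℝ) : dot3 x y = dot3 y x := by simp [dot3]; ring

lemma bil_add_left (H : Fin 3 → Fin 3 → ℝ) (u v y : Fin 3 → ℝ) :
    bil H (fun i => u i + v i) y = bil H u y + bil H v y := by
  simp [bil, Fin.sum_univ_three]; ring

lemma bil_smul_left (H : Fin 3 → Fin 3 → ℝ) (c : ℝ) (u y : Fin 3 → ℝ) :
    bil H (fun i => c * u i) y = c * bil H u y := by
  simp [bil, Fin.sum_univ_three]; ring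

lemma bil_add_right (H : Fin 3 → Fin 3 → ℝ) (u v y : Fin 3 → ℝ) :
    bil H y (fun i => u i + v i) = bil H y u + bil H y v := by
  simp [bil, Fin.sum_univ_three]; ring

lemma bil_smul_right (H : Fin 3 → Fin 3 → ℝ) (c : ℝ) (u y : Fin 3 → ℝ) :
    bil H y (fun i => c * u i) = c * bil H y u := by
  simp [bil, Fin.sum_univ_three]; ring

/-- Main linear-algebra step. -/
lemma key3 (H : Fin 3 → Fin 3 → ℝ) (hsymm : ∀ i j, H i j = H j i)
    (g v0 v1 v2 : Fin 3 → ℝ) (hg : g ≠ 0) (hv0 : v0 ≠ 0)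
    (h10 : ∀ c : ℝ, v1 ≠ c • v0) (h20 : ∀ c : ℝ, v2 ≠ c • v0) (h21 : ∀ c : ℝ, v2 ≠ c • v1)
    (hgv0 : dot3 g v0 = 0) (hgv1 : dot3 g v1 = 0) (hgv2 : dot3 g v2 = 0)
    (hQ0 : bil H v0 v0 = 0) (hQ1 : bil H v1 v1 = 0) (hQ2 : bil H v2 v2 = 0)
    (w : Fin 3 → ℝ) (hw : dot3 g w = 0) :
    cross3 (hvec H w) g = 0 := by
  set n := cross3 v0 v1 with hn_def
  have hn : n ≠ 0 := by
    intro h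
    have c0 := congrFun h 0
    have c1 := congrFun h 1
    have c2 := congrFun h 2
    simp only [hn_def, cross3, Matrix.cons_val_zero, Matrix.cons_val_one, Matrix.head_cons,
      Matrix.cons_val_two, Matrix.tail_cons, Pi.zero_apply] at c0 c1 c2
    have h' : cross3 v1 v0 = 0 := by
      apply vec3_ext <;> simp only [cross3, Matrix.cons_val_zero, Matrix.cons_val_one,
        Matrix.head_cons, Matrix.cons_val_two, Matrix.tail_cons, Pi.zero_apply] <;> linarith
    obtain ⟨c, hc⟩ := par_of_cross_eq_zero h' hv0
    exact h10 c hc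
  have hs : dot3 n n ≠ 0 := dot3_self_ne hn
  have hgn : cross3 g n = 0 := cross_cross_eq_zero hgv0 hgv1
  obtain ⟨μ, hμ⟩ := par_of_cross_eq_zero hgn hn
  have hμ0 : μ ≠ 0 := by
    rintro rfl
    apply hg
    rw [hμ, zero_smul]
  have hdot : ∀ u : Fin 3 → ℝ, dot3 g u = 0 → dot3 u n = 0 := by
    intro u hu
    have he : dot3 g u = μ * dot3 u n := by
      have e0 := congrFun hμ 0
      have e1 := congrFun hμ 1
      have e2 := congrFun hμ 2
      simp only [Pi.smul_apply, smul_eq_mul] at e0 e1 e2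
      simp only [dot3]
      rw [e0, e1, e2]; ring
    have := he ▸ hu
    exact (mul_eq_zero.mp this.symm.symm).resolve_left hμ0
  set s := dot3 n n with hs_def
  -- coefficients of v2 and w in the basis (v0, v1)
  have hexp : ∀ u : Fin 3 → ℝ, dot3 u n = 0 →
      (fun i => s * u i) =
        (fun i => dot3 (cross3 u v1) n * v0 i + dot3 (cross3 v0 u) n * v1 i) := by
    intro u hu
    funext i
    have := cramer3 v0 v1 u i
    rw [← hn_def] at this
    rw [hu] at this
    simpa using this
  -- the bilinear form vanishes on the pair (v0, v1)
  have hB01 : bil H v0 v1 = 0 := by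
    set A := dot3 (cross3 v2 v1) n with hA
    set B := dot3 (cross3 v0 v2) n with hB
    have e2 := hexp v2 (hdot v2 hgv2)
    have hbil : s * (s * bil H v2 v2) =
        A * (A * bil H v0 v0) + A * (B * bil H v0 v1) +
          B * (A * bil H v1 v0) + B * (B * bil H v1 v1) := by
      calc s * (s * bil H v2 v2)
          = bil H (fun i => s * v2 i) (fun i => s * v2 i) := by
            rw [bil_smul_left, bil_smul_right]
        _ = bil H (fun i => A * v0 i + B * v1 i) (fun i => A * v0 i + B * v1 i) := by
            rw [e2]
        _ = _ := by
            simp only [bil_add_left, bil_add_right, bil_smul_left, bil_smul_right]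
            ring
    rw [hQ0, hQ1, hQ2, bil_symm hsymm v1 v0] at hbil
    have hA0 : A ≠ 0 := by
      intro h0
      apply h21 (B / s)
      funext i
      have := congrFun e2 i
      rw [← hA, ← hB, h0] at this
      simp only [Pi.smul_apply, smul_eq_mul] at this ⊢
      field_simp
      linarith [this]
    have hB0 : B ≠ 0 := by
      intro h0
      apply h20 (A / s)
      funext i
      have := congrFun e2 i
      rw [← hA, ← hB, h0] at this
      simp only [Pi.smul_apply, smul_eq_mul] at this ⊢
      field_simp
      linarith [this]
    have : A * B * (2 * bil H v0 v1) = 0 := by linarith [hbil]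
    have := (mul_eq_zero.mp this).resolve_left (mul_ne_zero hA0 hB0)
    linarith
  -- the bilinear form kills w against v0 and v1
  have hwn : dot3 w n = 0 := hdot w hw
  have ew := hexp w hwn
  set Aw := dot3 (cross3 w v1) n with hAw
  set Bw := dot3 (cross3 v0 w) n with hBw
  have hbw0 : bil H v0 w = 0 := by
    have : s * bil H v0 w = Aw * bil H v0 v0 + Bw * bil H v0 v1 := by
      rw [← bil_smul_right, ew, bil_add_right, bil_smul_right, bil_smul_right]
    rw [hQ0, hB01] at this
    have h' : s * bil H v0 w = 0 := by linarith [this]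
    exact (mul_eq_zero.mp h').resolve_left hs
  have hbw1 : bil H v1 w = 0 := by
    have : s * bil H v1 w = Aw * bil H v1 v0 + Bw * bil H v1 v1 := by
      rw [← bil_smul_right, ew, bil_add_right, bil_smul_right, bil_smul_right]
    rw [hQ1, bil_symm hsymm v1 v0, hB01] at this
    have h' : s * bil H v1 w = 0 := by linarith [this]
    exact (mul_eq_zero.mp h').resolve_left hs
  -- hence H·w is orthogonal to v0 and v1, so parallel to g
  have hx0 : dot3 (hvec H w) v0 = 0 := by
    rw [dot3_hvec, bil_symm hsymm w v0]; exact hbw0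
  have hx1 : dot3 (hvec H w) v1 = 0 := by
    rw [dot3_hvec, bil_symm hsymm w v1]; exact hbw1
  have hxn : cross3 (hvec H w) n = 0 := cross_cross_eq_zero hx0 hx1
  have c0 := congrFun hxn 0
  have c1 := congrFun hxn 1
  have c2 := congrFun hxn 2
  simp only [cross3, Matrix.cons_val_zero, Matrix.cons_val_one, Matrix.head_cons,
    Matrix.cons_val_two, Matrix.tail_cons, Pi.zero_apply] at c0 c1 c2
  have e0 := congrFun hμ 0
  have e1 := congrFun hμ 1
  have e2 := congrFun hμ 2
  simp only [Pi.smul_apply, smul_eq_mul] at e0 e1 e2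
  apply vec3_ext <;> simp only [cross3, Matrix.cons_val_zero, Matrix.cons_val_one,
    Matrix.head_cons, Matrix.cons_val_two, Matrix.tail_cons, Pi.zero_apply]
  · rw [e1, e2]; linear_combination μ * c0
  · rw [e0, e2]; linear_combination μ * c1
  · rw [e0, e1]; linear_combination μ * c2

lemma dot3_cross_self (x y : Fin 3 → ℝ) : dot3 x (cross3 x y) = 0 := by
  simp [dot3, cross3]; ring

/-- Gradient values at a point. -/
noncomputable def evalGrad (p : MvPolynomial (Fin 3) ℝ) (a : Fin 3 → ℝ) : Fin 3 → ℝ :=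
  fun i => eval a (pderiv i p)

/-- Hessian values at a point. -/
noncomputable def evalHess (p : MvPolynomial (Fin 3) ℝ) (a : Fin 3 → ℝ) :
    Fin 3 → Fin 3 → ℝ :=
  fun m i => eval a (pderiv m (pderiv i p))

/-- If `a` is a regular point (`∇p(a) ≠ 0`) of the zero set `S` of `p` and three
distinct lines contained in `S` pass through `a`, then `a` is a flat point:
every component of the algebraic second fundamental form `II(p)` vanishes at `a`. -/
theorem flat_point_of_three_lines (p : MvPolynomial (Fin 3) ℝ) (a : Fin 3 → ℝ)
    (hreg : ¬ ∀ i : Fin 3, eval a (pderiv i p) = 0)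
    (v : Fin 3 → (Fin 3 → ℝ))
    (hv : ∀ k : Fin 3, v k ≠ 0)
    (hdistinct : ∀ k k' : Fin 3, k ≠ k' → ∀ c : ℝ, v k ≠ c • v k')
    (hlines : ∀ k : Fin 3, ∀ t : ℝ, eval (a + t • v k) p = 0) :
    ∀ j i : Fin 3, eval a (IIform p j i) = 0 := by
  set G := evalGrad p a with hG
  set HM := evalHess p a with hHM
  -- first derivative along each line vanishes
  have hfirst : ∀ k : Fin 3, ∀ t : ℝ,
      (∑ i : Fin 3, v k i * eval (a + t • v k) (pderiv i p)) = 0 := by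
    intro k t
    have hd := line_hasDerivAt p a (v k) t
    have hf : (fun t : ℝ => eval (a + t • v k) p) = fun _ => (0 : ℝ) :=
      funext (hlines k)
    rw [hf] at hd
    exact hd.unique (hasDerivAt_const t 0)
  -- gradient is orthogonal to each direction
  have hgv : ∀ k : Fin 3, dot3 G (v k) = 0 := by
    intro k
    have := hfirst k 0
    simp only [zero_smul, add_zero, Fin.sum_univ_three] at this
    simp only [dot3, hG, evalGrad]
    linarith [this]
  -- second derivative along each line vanishes
  have hsecond : ∀ k : Fin 3,
      (∑ i : Fin 3, v k i * ∑ j : Fin 3, v k j * eval a (pderiv j (pderiv i p))) = 0 := by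
    intro k
    have hd : HasDerivAt
        (fun t : ℝ => ∑ i : Fin 3, v k i * eval (a + t • v k) (pderiv i p))
        (∑ i : Fin 3, v k i *
          ∑ j : Fin 3, v k j * eval (a + (0:ℝ) • v k) (pderiv j (pderiv i p))) 0 := by
      apply HasDerivAt.fun_sum
      intro i _
      exact (line_hasDerivAt (pderiv i p) a (v k) 0).const_mul (v k i)
    have hf : (fun t : ℝ => ∑ i : Fin 3, v k i * eval (a + t • v k) (pderiv i p))
        = fun _ => (0 : ℝ) := funext (hfirst k)
    rw [hf] at hd
    have := hd.unique (hasDerivAt_const 0 0)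
    simpa [zero_smul] using this
  -- the quadratic form vanishes on each direction
  have hQ : ∀ k : Fin 3, bil HM (v k) (v k) = 0 := by
    intro k
    have h := hsecond k
    simp only [Fin.sum_univ_three] at h
    simp only [bil, Fin.sum_univ_three, hHM, evalHess]
    linarith [h]
  -- the Hessian is symmetric
  have hsymm : ∀ i j : Fin 3, HM i j = HM j i := by
    intro i j
    simp only [hHM, evalHess, pderiv_pderiv_comm]
  -- the gradient is nonzero
  have hGne : G ≠ 0 := by
    intro h
    apply hreg
    intro i
    exact congrFun h i
  -- apply the main linear-algebra lemma
  intro j i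
  have hkey := key3 HM hsymm G (v 0) (v 1) (v 2) hGne (hv 0)
    (hdistinct 1 0 (by decide)) (hdistinct 2 0 (by decide)) (hdistinct 2 1 (by decide))
    (hgv 0) (hgv 1) (hgv 2) (hQ 0) (hQ 1) (hQ 2)
    (cross3 G (fun m => if m = j then 1 else 0))
    (dot3_cross_self G _)
  have heval : eval a (IIform p j i)
      = cross3 (hvec HM (cross3 G (fun m => if m = j then 1 else 0))) G i := by
    fin_cases j <;> fin_cases i <;>
      simp [IIform, pcross, dirDeriv, pgrad, stdVec, cross3, hvec, dot3,
        hG, hHM, evalGrad, evalHess, Fin.sum_univ_three] <;> ring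
  rw [heval, hkey]
  rfl
end

section
/- Any set of N lines in R^3 determines at most C·N^{3/2} joints, for a universal constant C. -/
open MvPolynomial

/-- A line in `ℝ³`: the image of an affine map `t ↦ a + t • v` with direction `v ≠ 0`. -/
def IsLine (ℓ : Set (Fin 3 → ℝ)) : Prop :=
  ∃ a v : Fin 3 → ℝ, v ≠ 0 ∧ ℓ = {x | ∃ t : ℝ, x = a + t • v}

/-- `x` is a joint of the family `L` of lines: three lines of `L` with linearly
independent direction vectors pass through `x`. -/
def IsJoint (L : Finset (Set (Fin 3 → ℝ))) (x : Fin 3 → ℝ) : Prop :=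
  ∃ ℓ₁ ∈ L, ∃ ℓ₂ ∈ L, ∃ ℓ₃ ∈ L, ∃ v₁ v₂ v₃ : Fin 3 → ℝ,
    LinearIndependent ℝ ![v₁, v₂, v₃] ∧
    (∀ t : ℝ, x + t • v₁ ∈ ℓ₁) ∧ (∀ t : ℝ, x + t • v₂ ∈ ℓ₂) ∧ (∀ t : ℝ, x + t • v₃ ∈ ℓ₃)

lemma isJoint_def (L : Finset (Set (Fin 3 → ℝ))) (x : Fin 3 → ℝ) : IsJoint L x ↔
  (∃ ℓ₁ ∈ L, ∃ ℓ₂ ∈ L, ∃ ℓ₃ ∈ L, ∃ v₁ v₂ v₃ : Fin 3 → ℝ,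
    LinearIndependent ℝ ![v₁, v₂, v₃] ∧
    (∀ t : ℝ, x + t • v₁ ∈ ℓ₁) ∧ (∀ t : ℝ, x + t • v₂ ∈ ℓ₂) ∧ (∀ t : ℝ, x + t • v₃ ∈ ℓ₃)) :=
  Iff.rfl



noncomputable def lineφ (a v : Fin 3 → ℝ) : Fin 3 → Polynomial ℝ :=
  fun i => Polynomial.C (a i) + Polynomial.X * Polynomial.C (v i)

lemma eval_aeval_poly (φ : Fin 3 → Polynomial ℝ) (p : MvPolynomial (Fin 3) ℝ) (t : ℝ) :
    Polynomial.eval t (aeval φ p) = eval (fun i => Polynomial.eval t (φ i)) p := by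
  induction p using MvPolynomial.induction_on with
  | C a => simp
  | add p q hp hq => simp [hp, hq]
  | mul_X p i hp => simp [hp]

lemma eval_lineComp (a v : Fin 3 → ℝ) (p : MvPolynomial (Fin 3) ℝ) (t : ℝ) :
    Polynomial.eval t (aeval (lineφ a v) p) = eval (a + t • v) p := by
  rw [eval_aeval_poly]
  have : (fun i => Polynomial.eval t (lineφ a v i)) = a + t • v := by
    funext i
    simp only [lineφ, Polynomial.eval_add, Polynomial.eval_C, Polynomial.eval_mul,
      Polynomial.eval_X, Pi.add_apply, Pi.smul_apply, smul_eq_mul]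
  rw [this]

lemma natDegree_lineComp (a v : Fin 3 → ℝ) (p : MvPolynomial (Fin 3) ℝ) :
    (aeval (lineφ a v) p).natDegree ≤ p.totalDegree := by
  have := MvPolynomial.aeval_natDegree_le (n := 1) p le_rfl (lineφ a v) (fun i => ?_)
  · simpa using this
  · unfold lineφ
    apply (Polynomial.natDegree_add_le _ _).trans
    simp only [Polynomial.natDegree_C, max_le_iff]
    refine ⟨Nat.zero_le _, (Polynomial.natDegree_mul_le).trans ?_⟩
    simp [Polynomial.natDegree_X_le]

lemma derivative_aeval (φ : Fin 3 → Polynomial ℝ) (p : MvPolynomial (Fin 3) ℝ) :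
    Polynomial.derivative (aeval φ p)
      = ∑ i, aeval φ (pderiv i p) * Polynomial.derivative (φ i) := by
  induction p using MvPolynomial.induction_on with
  | C a => simp
  | add p q hp hq => simp [hp, hq, Finset.sum_add_distrib, add_mul]
  | mul_X p i hp =>
    simp only [map_mul, aeval_X, Polynomial.derivative_mul, hp, pderiv_mul, pderiv_X, map_add,
      Finset.sum_add_distrib, add_mul, Finset.sum_mul, Pi.single_apply]
    refine congrArg₂ (· + ·) ?_ ?_
    · exact Finset.sum_congr rfl fun j _ => by ring
    · simp [apply_ite, Finset.sum_ite_eq, mul_comm]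

lemma directional_deriv_zero (a v : Fin 3 → ℝ) (p : MvPolynomial (Fin 3) ℝ)
    (h : ∀ t : ℝ, eval (a + t • v) p = 0) :
    ∑ j, v j * eval a (pderiv j p) = 0 := by
  have hq : aeval (lineφ a v) p = 0 := by
    apply Polynomial.zero_of_eval_zero
    intro t; rw [eval_lineComp]; exact h t
  have hd := derivative_aeval (lineφ a v) p
  rw [hq, map_zero] at hd
  have := congrArg (Polynomial.eval 0) hd.symm
  simp only [Polynomial.eval_zero, Polynomial.eval_finset_sum, Polynomial.eval_mul] at this
  rw [← this]
  apply Finset.sum_congr rfl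
  intro j _
  have h1 : Polynomial.eval 0 (aeval (lineφ a v) (pderiv j p)) = eval a (pderiv j p) := by
    rw [eval_lineComp]; simp
  have h2 : Polynomial.eval (0:ℝ) (Polynomial.derivative (lineφ a v j)) = v j := by
    simp [lineφ]
  rw [h1, h2]; ring

lemma grad_zero_at_joint (x v₁ v₂ v₃ : Fin 3 → ℝ)
    (hli : LinearIndependent ℝ ![v₁, v₂, v₃]) (g : Fin 3 → ℝ)
    (h : ∀ i : Fin 3, ∑ j, (![v₁, v₂, v₃] i) j * g j = 0) :
    ∀ j, g j = 0 := by
  classical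
  let f : (Fin 3 → ℝ) →ₗ[ℝ] ℝ :=
    { toFun := fun w => ∑ j, w j * g j
      map_add' := by intro u w; simp [add_mul, Finset.sum_add_distrib]
      map_smul' := by intro c w; simp [Finset.mul_sum, mul_assoc]  }
  have hspan : Submodule.span ℝ (Set.range ![v₁, v₂, v₃]) = ⊤ :=
    hli.span_eq_top_of_card_eq_finrank (by simp [Module.finrank_fin_fun])
  have hf : f = 0 := by
    apply LinearMap.ext
    intro w
    have hw : w ∈ Submodule.span ℝ (Set.range ![v₁, v₂, v₃]) := by rw [hspan]; trivial
    induction hw using Submodule.span_induction with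
    | mem y hy =>
      obtain ⟨i, rfl⟩ := hy
      have := h i
      simpa [f, mul_comm] using this
    | zero => simp
    | add y z _ _ hy hz => simp [map_add, hy, hz]
    | smul c y _ hy => simp [map_smul, hy]
  intro j
  have := congrFun (congrArg (fun (f : (Fin 3 → ℝ) →ₗ[ℝ] ℝ) => f.toFun) hf) (Pi.single j 1)
  simpa [f, Pi.single_apply, Finset.sum_ite_eq, mul_ite] using this

lemma exists_vanishing_poly (S : Finset (Fin 3 → ℝ)) (m : ℕ) (hS : S.card < (m + 1) ^ 3) :
    ∃ p : MvPolynomial (Fin 3) ℝ, p ≠ 0 ∧ p.totalDegree ≤ 3 * m ∧ ∀ x ∈ S, eval x p = 0 := by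
  classical
  -- evaluation linear map from coefficient vectors to functions on S
  let φ : ((Fin 3 → Fin (m + 1)) → ℝ) →ₗ[ℝ] ({x // x ∈ S} → ℝ) :=
    { toFun := fun c x => ∑ e : Fin 3 → Fin (m + 1), c e * ∏ i, (x : Fin 3 → ℝ) i ^ (e i : ℕ)
      map_add' := by intro u w; funext x; simp [add_mul, Finset.sum_add_distrib]
      map_smul' := by intro r w; funext x; simp [Finset.mul_sum, mul_assoc] }
  have hcard : Module.finrank ℝ ({x // x ∈ S} → ℝ)
      < Module.finrank ℝ ((Fin 3 → Fin (m + 1)) → ℝ) := by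
    rw [Module.finrank_pi, Module.finrank_pi]
    simpa [Fintype.card_fun] using hS
  have hninj : ¬ Function.Injective φ := fun hinj =>
    absurd (LinearMap.finrank_le_finrank_of_injective hinj) (not_le.mpr hcard)
  obtain ⟨c, hc0, hcne⟩ : ∃ c, φ c = 0 ∧ c ≠ 0 := by
    rw [← LinearMap.ker_eq_bot] at hninj
    obtain ⟨c, hc, hcne⟩ := Submodule.exists_mem_ne_zero_of_ne_bot hninj
    exact ⟨c, hc, hcne⟩
  -- exponent embedding
  let E : (Fin 3 → Fin (m + 1)) → (Fin 3 →₀ ℕ) :=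
    fun e => Finsupp.equivFunOnFinite.symm (fun i => (e i : ℕ))
  have hEinj : Function.Injective E := by
    intro e e' h
    funext i
    have := congrFun (congrArg (fun f : Fin 3 →₀ ℕ => (f : Fin 3 → ℕ)) h) i
    simp only [E, Finsupp.equivFunOnFinite_symm_coe] at this
    exact Fin.ext this
  refine ⟨∑ e : Fin 3 → Fin (m + 1), monomial (E e) (c e), ?_, ?_, ?_⟩
  · intro h0
    obtain ⟨e₀, he₀⟩ : ∃ e₀, c e₀ ≠ 0 := by
      by_contra h; push_neg at h; exact hcne (funext h)
    have : coeff (E e₀) (∑ e : Fin 3 → Fin (m + 1), monomial (E e) (c e)) = c e₀ := by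
      rw [coeff_sum]
      rw [Finset.sum_eq_single e₀]
      · simp [coeff_monomial]
      · intro e _ hne
        rw [coeff_monomial, if_neg (fun h => hne (hEinj h))]
      · simp
    rw [h0] at this
    simp at this
    exact he₀ this.symm
  · apply (totalDegree_finset_sum _ _).trans
    apply Finset.sup_le
    intro e _
    apply (totalDegree_monomial_le _ _).trans
    have : (E e).sum (fun _ => id) = ∑ i : Fin 3, (e i : ℕ) := by
      apply Finsupp.sum_fintype
      intro i; rfl
    rw [this]
    calc ∑ i : Fin 3, (e i : ℕ) ≤ ∑ _i : Fin 3, m :=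
          Finset.sum_le_sum fun i _ => Nat.lt_succ_iff.mp (e i).isLt
      _ = 3 * m := by simp [mul_comm]
  · intro x hx
    have := congrFun hc0 ⟨x, hx⟩
    simp only [Pi.zero_apply] at this
    rw [map_sum]
    rw [← this]
    apply Finset.sum_congr rfl
    intro e _
    rw [eval_monomial]
    have : (E e).prod (fun i k => x i ^ k) = ∏ i : Fin 3, x i ^ (e i : ℕ) := by
      apply Finsupp.prod_fintype
      intro i; exact pow_zero _
    rw [this]

lemma finsupp_sum_eq (s : Fin 3 →₀ ℕ) : s.sum (fun _ e => e) = ∑ j : Fin 3, s j :=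
  Finsupp.sum_fintype _ _ (fun _ => rfl)

lemma totalDegree_pderiv_lt (p : MvPolynomial (Fin 3) ℝ) (hd : 1 ≤ p.totalDegree) (i : Fin 3) :
    (pderiv i p).totalDegree < p.totalDegree := by
  classical
  have key : (pderiv i p).totalDegree ≤ p.totalDegree - 1 := by
    conv_lhs => rw [← support_sum_monomial_coeff p]
    rw [map_sum]
    apply (totalDegree_finset_sum _ _).trans
    apply Finset.sup_le
    intro s hs
    rw [pderiv_monomial]
    by_cases hsi : s i = 0
    · simp [hsi]
    · apply (totalDegree_monomial_le _ _).trans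
      have hsum : (s - Finsupp.single i 1).sum (fun _ => id) = ∑ j : Fin 3, (s j - Finsupp.single i 1 j) := by
        rw [Finsupp.sum_fintype _ _ (fun _ => rfl)]
        exact Finset.sum_congr rfl fun j _ => Finsupp.tsub_apply _ _ _
      rw [hsum]
      have hle : s.sum (fun _ e => e) ≤ p.totalDegree := le_totalDegree hs
      rw [finsupp_sum_eq, ← Finset.add_sum_erase Finset.univ _ (Finset.mem_univ i)] at hle
      rw [← Finset.add_sum_erase Finset.univ _ (Finset.mem_univ i)]
      have herase : ∑ j ∈ Finset.univ.erase i, (s j - Finsupp.single i 1 j)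
          = ∑ j ∈ Finset.univ.erase i, s j :=
        Finset.sum_congr rfl fun j hj => by
          rw [Finsupp.single_apply, if_neg fun h => (Finset.mem_erase.mp hj).1 h.symm, tsub_zero]
      rw [herase, Finsupp.single_eq_same]
      omega
  omega

lemma exists_pderiv_ne_zero (p : MvPolynomial (Fin 3) ℝ) (hd : p.totalDegree ≠ 0) :
    ∃ i, pderiv i p ≠ 0 := by
  classical
  rw [Ne, totalDegree_eq_zero_iff] at hd
  push_neg at hd
  obtain ⟨s, hs, i, hsi⟩ := hd
  refine ⟨i, fun h0 => ?_⟩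
  have hco : coeff (s - Finsupp.single i 1) (pderiv i p) = coeff s p * (s i : ℝ) := by
    conv_lhs => rw [← support_sum_monomial_coeff p]
    rw [map_sum, coeff_sum]
    rw [Finset.sum_eq_single s]
    · rw [pderiv_monomial, coeff_monomial, if_pos rfl]
    · intro s' _ hne
      rw [pderiv_monomial, coeff_monomial]
      split_ifs with h
      · by_cases h0' : s' i = 0
        · simp [h0']
        · exfalso
          apply hne
          have h1 : Finsupp.single i 1 ≤ s' := by
            rw [Finsupp.single_le_iff]; omega
          have h2 : Finsupp.single i 1 ≤ s := by
            rw [Finsupp.single_le_iff]; omega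
          have := congrArg (· + Finsupp.single i 1) h
          simpa [tsub_add_cancel_of_le h1, tsub_add_cancel_of_le h2] using this
      · rfl
    · intro h; exact absurd hs h
  rw [h0] at hco
  simp only [coeff_zero] at hco
  have h1 : coeff s p ≠ 0 := mem_support_iff.mp hs
  have h2 : (s i : ℝ) ≠ 0 := Nat.cast_ne_zero.mpr hsi
  exact (mul_ne_zero h1 h2) hco.symm
open Classical in
lemma exists_good_line (L : Finset (Set (Fin 3 → ℝ))) (hL : ∀ ℓ ∈ L, IsLine ℓ)
    (J : Finset (Fin 3 → ℝ)) (hJ : ∀ x ∈ J, IsJoint L x) (hne : J.Nonempty)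
    (m : ℕ) (hm : J.card < (m + 1) ^ 3) :
    ∃ ℓ ∈ L, (J.filter (· ∈ ℓ)).card ≤ 3 * m := by
  classical
  by_contra hcon
  push_neg at hcon
  set P : ℕ → Prop := fun d => ∃ p : MvPolynomial (Fin 3) ℝ,
    p ≠ 0 ∧ p.totalDegree ≤ d ∧ ∀ x ∈ J, eval x p = 0 with hPdef
  have hP : P (3 * m) := exists_vanishing_poly J m hm
  have hPex : ∃ d, P d := ⟨_, hP⟩
  obtain ⟨p, hp0, hpd, hpv⟩ := Nat.find_spec hPex
  have hdle : Nat.find hPex ≤ 3 * m := Nat.find_min' hPex hP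
  have hvan : ∀ ℓ ∈ L, ∀ y ∈ ℓ, eval y p = 0 := by
    intro ℓ hℓ
    obtain ⟨a, v, hv, rfl⟩ := hL ℓ hℓ
    set F : Finset (Fin 3 → ℝ) := J.filter (· ∈ {x : Fin 3 → ℝ | ∃ t : ℝ, x = a + t • v}) with hF
    have hcard : 3 * m < F.card := hcon _ hℓ
    have hmemt : ∀ x ∈ F, ∃ t : ℝ, x = a + t • v := fun x hx => (Finset.mem_filter.mp hx).2
    let T : F → ℝ := fun x => Classical.choose (hmemt x x.2)
    have hT : ∀ x : F, (x : Fin 3 → ℝ) = a + T x • v := fun x => Classical.choose_spec (hmemt x x.2)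
    have hTinj : Function.Injective T := by
      intro x y hxy
      apply Subtype.ext
      rw [hT x, hT y, hxy]
    have hq : aeval (lineφ a v) p = 0 := by
      apply Polynomial.eq_zero_of_natDegree_lt_card_of_eval_eq_zero _ hTinj
      · intro x
        rw [eval_lineComp, ← hT x]
        exact hpv x (Finset.mem_filter.mp x.2).1
      · calc (aeval (lineφ a v) p).natDegree ≤ p.totalDegree := natDegree_lineComp a v p
          _ ≤ 3 * m := hpd.trans hdle
          _ < F.card := hcard
          _ = Fintype.card F := (Fintype.card_coe F).symm
    rintro y ⟨t, rfl⟩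
    have := congrArg (Polynomial.eval t) hq
    rw [eval_lineComp] at this
    simpa using this
  have hgrad : ∀ x ∈ J, ∀ j, eval x (pderiv j p) = 0 := by
    intro x hx
    obtain ⟨ℓ₁, h1, ℓ₂, h2, ℓ₃, h3, v₁, v₂, v₃, hli, hm1, hm2, hm3⟩ := hJ x hx
    apply grad_zero_at_joint x v₁ v₂ v₃ hli
    intro i
    fin_cases i
    · simpa using directional_deriv_zero x v₁ p (fun t => hvan ℓ₁ h1 _ (hm1 t))
    · simpa using directional_deriv_zero x v₂ p (fun t => hvan ℓ₂ h2 _ (hm2 t))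
    · simpa using directional_deriv_zero x v₃ p (fun t => hvan ℓ₃ h3 _ (hm3 t))
  have hd0 : p.totalDegree ≠ 0 := by
    intro h
    obtain ⟨x₀, hx₀⟩ := hne
    have hsup : ∀ s ∈ p.support, s = 0 := by
      intro s hs
      ext j
      exact (totalDegree_eq_zero_iff _ p).mp h s hs j
    have hpC : p = C (coeff 0 p) := by
      apply MvPolynomial.ext
      intro s
      by_cases h0 : s = 0
      · subst h0; simp [coeff_C]
      · rw [coeff_C, if_neg (Ne.symm h0)]
        by_contra hne'
        exact h0 (hsup s (mem_support_iff.mpr hne'))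
    have := hpv x₀ hx₀
    rw [hpC] at this
    simp only [eval_C] at this
    apply hp0
    rw [hpC, this, map_zero]
  obtain ⟨i, hi⟩ := exists_pderiv_ne_zero p hd0
  have hlt := totalDegree_pderiv_lt p (Nat.one_le_iff_ne_zero.mpr hd0) i
  have hP' : P (p.totalDegree - 1) :=
    ⟨pderiv i p, hi, by omega, fun x hx => hgrad x hx i⟩
  have hfind := Nat.find_min' hPex hP'
  have hge : p.totalDegree ≤ Nat.find hPex := hpd
  omega

lemma cbrt_exists (n : ℕ) : ∃ m, n < (m + 1) ^ 3 :=
  ⟨n, Nat.lt_of_lt_of_le (Nat.lt_succ_self n) (Nat.le_self_pow (by norm_num) _)⟩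

noncomputable def cbrtBound (n : ℕ) : ℕ := Nat.find (cbrt_exists n)

lemma cbrt_lt (n : ℕ) : n < (cbrtBound n + 1) ^ 3 := Nat.find_spec (cbrt_exists n)

lemma cbrt_mono {n n' : ℕ} (h : n ≤ n') : cbrtBound n ≤ cbrtBound n' :=
  Nat.find_min' _ (lt_of_le_of_lt h (cbrt_lt n'))

lemma cbrt_cube_le (n : ℕ) : (cbrtBound n) ^ 3 ≤ n := by
  rcases Nat.eq_zero_or_pos (cbrtBound n) with h | h
  · simp [h]
  · have := Nat.find_min (cbrt_exists n) (m := cbrtBound n - 1) (Nat.sub_lt h one_pos)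
    push_neg at this
    calc cbrtBound n ^ 3 = ((cbrtBound n - 1) + 1) ^ 3 := by congr 1; omega
      _ ≤ n := this

lemma count_bound (n : ℕ) : ∀ (L : Finset (Set (Fin 3 → ℝ))), L.card ≤ n →
    (∀ ℓ ∈ L, IsLine ℓ) → ∀ (J : Finset (Fin 3 → ℝ)), (∀ x ∈ J, IsJoint L x) →
    J.card ≤ L.card * (3 * cbrtBound J.card) := by
  classical
  induction n with
  | zero =>
    intro L hLn hL J hJ
    have hL0 : L = ∅ := Finset.card_eq_zero.mp (Nat.le_zero.mp hLn)
    subst hL0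
    have : J = ∅ := by
      apply Finset.eq_empty_of_forall_notMem
      intro x hx
      obtain ⟨ℓ₁, h1, -⟩ := (isJoint_def _ _).mp (hJ x hx)
      exact absurd h1 (Finset.notMem_empty _)
    simp [this]
  | succ n ih =>
    intro L hLn hL J hJ
    rcases J.eq_empty_or_nonempty with rfl | hne
    · simp
    obtain ⟨ℓ, hℓL, hline⟩ := exists_good_line L hL J hJ hne (cbrtBound J.card) (cbrt_lt _)
    set J' := J.filter (· ∉ ℓ) with hJ'def
    set L' := L.erase ℓ with hL'def
    have hJ'j : ∀ x ∈ J', IsJoint L' x := by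
      intro x hx
      obtain ⟨hxJ, hxℓ⟩ := Finset.mem_filter.mp hx
      obtain ⟨ℓ₁, h1, ℓ₂, h2, ℓ₃, h3, v₁, v₂, v₃, hli, hm1, hm2, hm3⟩ :=
        (isJoint_def _ _).mp (hJ x hxJ)
      have hmem : ∀ (ℓ'' : Set (Fin 3 → ℝ)) (v : Fin 3 → ℝ), ℓ'' ∈ L →
          (∀ t : ℝ, x + t • v ∈ ℓ'') → ℓ'' ∈ L' := by
        intro ℓ'' v hmemL hv
        apply Finset.mem_erase_of_ne_of_mem _ hmemL
        intro heq
        apply hxℓ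
        rw [← heq]
        have := hv 0
        simpa using this
      exact (isJoint_def _ _).mpr ⟨ℓ₁, hmem ℓ₁ v₁ h1 hm1, ℓ₂, hmem ℓ₂ v₂ h2 hm2,
        ℓ₃, hmem ℓ₃ v₃ h3 hm3, v₁, v₂, v₃, hli, hm1, hm2, hm3⟩
    have hL'l : ∀ ℓ' ∈ L', IsLine ℓ' := fun ℓ' h => hL ℓ' (Finset.mem_of_mem_erase h)
    have hLpos : 1 ≤ L.card := Finset.card_pos.mpr ⟨ℓ, hℓL⟩
    have hcardL' : L'.card ≤ n := by
      rw [hL'def, Finset.card_erase_of_mem hℓL]; omega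
    have ihJ' := ih L' hcardL' hL'l J' hJ'j
    have hsplit : (J.filter (· ∈ ℓ)).card + J'.card = J.card := by
      rw [hJ'def]
      exact Finset.card_filter_add_card_filter_not (fun x => x ∈ ℓ)
    have hmono : cbrtBound J'.card ≤ cbrtBound J.card :=
      cbrt_mono (Finset.card_filter_le J _)
    have hLcard : L.card = L'.card + 1 := by
      rw [hL'def, Finset.card_erase_of_mem hℓL]; omega
    have h1 : J'.card ≤ L'.card * (3 * cbrtBound J.card) :=
      ihJ'.trans (Nat.mul_le_mul_left _ (Nat.mul_le_mul_left _ hmono))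
    calc J.card = (J.filter (· ∈ ℓ)).card + J'.card := hsplit.symm
      _ ≤ 3 * cbrtBound J.card + L'.card * (3 * cbrtBound J.card) := Nat.add_le_add hline h1
      _ = (L'.card + 1) * (3 * cbrtBound J.card) := by ring
      _ = L.card * (3 * cbrtBound J.card) := by rw [hLcard]

/-- **The joints theorem.** Any `N` lines in `ℝ³` form at most `O(N^{3/2})` joints. -/
theorem joints_theorem :
    ∃ C : ℝ, 0 < C ∧ ∀ (L : Finset (Set (Fin 3 → ℝ))), (∀ ℓ ∈ L, IsLine ℓ) →
      ∀ (J : Finset (Fin 3 → ℝ)), (∀ x ∈ J, IsJoint L x) →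
        (J.card : ℝ) ≤ C * (L.card : ℝ) ^ ((3 : ℝ) / 2) := by
  refine ⟨6, by norm_num, ?_⟩
  intro L hL J hJ
  have hcount := count_bound L.card L le_rfl hL J hJ
  have hcube := cbrt_cube_le J.card
  set c := cbrtBound J.card with hc
  set n := L.card with hn
  rcases Nat.eq_zero_or_pos c with hc0 | hcpos
  · have : J.card = 0 := by
      have := cbrt_lt J.card
      rw [← hc, hc0] at this
      omega
    rw [this]
    simp only [Nat.cast_zero]
    positivity
  rcases Nat.eq_zero_or_pos n with hn0 | hnpos
  · rw [hn0] at hcount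
    simp only [Nat.zero_mul, Nat.le_zero] at hcount
    rw [hcount]
    simp only [Nat.cast_zero]
    positivity
  -- c^2 ≤ 3n
  have hc2 : c ^ 2 ≤ 3 * n := by
    have h3 : c ^ 3 ≤ n * (3 * c) := hcube.trans hcount
    have : c ^ 2 * c ≤ (3 * n) * c := by ring_nf; ring_nf at h3; omega
    exact Nat.le_of_mul_le_mul_right this hcpos
  -- real arithmetic
  have hcR : (c : ℝ) ≤ Real.sqrt (3 * n) := by
    rw [show ((c : ℝ)) = Real.sqrt ((c : ℝ) ^ 2) by rw [Real.sqrt_sq (by positivity)]]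
    apply Real.sqrt_le_sqrt
    exact_mod_cast hc2
  have hJR : (J.card : ℝ) ≤ 3 * n * Real.sqrt (3 * n) := by
    calc (J.card : ℝ) ≤ (n : ℝ) * (3 * c) := by exact_mod_cast hcount
      _ = 3 * n * c := by ring
      _ ≤ 3 * n * Real.sqrt (3 * n) := by
          apply mul_le_mul_of_nonneg_left hcR (by positivity)
  refine hJR.trans ?_
  have hnR : (0 : ℝ) < n := by exact_mod_cast hnpos
  have hrw : (n : ℝ) ^ ((3 : ℝ) / 2) = n * Real.sqrt n := by
    rw [show ((3 : ℝ) / 2) = 1 + 1 / 2 by norm_num, Real.rpow_add hnR, Real.rpow_one,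
      Real.sqrt_eq_rpow]
  rw [hrw]
  rw [Real.sqrt_mul (by norm_num)]
  have hs3 : Real.sqrt 3 ≤ 2 := by
    have h := Real.sq_sqrt (show (0:ℝ) ≤ 3 by norm_num)
    have hnn := Real.sqrt_nonneg 3
    nlinarith
  have hsn : (0:ℝ) ≤ Real.sqrt n := Real.sqrt_nonneg _
  have ht : (0:ℝ) ≤ (n:ℝ) * Real.sqrt n := mul_nonneg hnR.le hsn
  calc 3 * (n:ℝ) * (Real.sqrt 3 * Real.sqrt n) = (3 * Real.sqrt 3) * ((n:ℝ) * Real.sqrt n) := by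
        ring
    _ ≤ 6 * ((n:ℝ) * Real.sqrt n) := mul_le_mul_of_nonneg_right (by linarith) ht
    _ = 6 * ((n:ℝ) * Real.sqrt n) := rfl
end
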